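/- arXiv:1805.12451 — 6 statements merged into one kernel-verified Lean document; each statement's English description precedes it below -/
import Mathlib

section
/- For probability mass functions P, Q with full support on a finite set X, D_∞^max(P,Q) = sup over nonempty subsets A ⊆ X of |log P(A) − log Q(A)|, where P(A) = Σ_{x∈A} P(x). -/
open Finset Real

/-- Rényi divergence of order infinity. -/
noncomputable def Dinf {α : Type*} [Fintype α] [Nonempty α] (P Q : α → ℝ) : ℝ :=
  Real.log (Finset.univ.sup' Finset.univ_nonempty (fun x => P x / Q x))

lemma dinf_side {α : Type*} [Fintype α] [Nonempty α] (P Q : α → ℝ)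
    (hP : ∀ x, 0 < P x) (hQ : ∀ x, 0 < Q x) (A : Finset α) (hA : A.Nonempty) :
    Real.log (∑ x ∈ A, P x) - Real.log (∑ x ∈ A, Q x) ≤ Dinf P Q := by
  set M := Finset.univ.sup' Finset.univ_nonempty (fun x => P x / Q x) with hM
  have hMpos : 0 < M := by
    have h := Finset.le_sup' (fun x => P x / Q x) (Finset.mem_univ (Classical.arbitrary α))
    exact lt_of_lt_of_le (div_pos (hP _) (hQ _)) h
  have hsum : ∑ x ∈ A, P x ≤ M * ∑ x ∈ A, Q x := by
    rw [Finset.mul_sum]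
    apply Finset.sum_le_sum
    intro x _
    have h1 : P x / Q x ≤ M :=
      Finset.le_sup' (fun x => P x / Q x) (Finset.mem_univ x)
    have h2 : P x = (P x / Q x) * Q x := (div_mul_cancel₀ (P x) (ne_of_gt (hQ x))).symm
    nlinarith [hQ x]
  have hPA : 0 < ∑ x ∈ A, P x := Finset.sum_pos (fun x _ => hP x) hA
  have hQA : 0 < ∑ x ∈ A, Q x := Finset.sum_pos (fun x _ => hQ x) hA
  have hlog := Real.log_le_log hPA hsum
  rw [Real.log_mul (ne_of_gt hMpos) (ne_of_gt hQA)] at hlog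
  unfold Dinf
  linarith

/-- `D_∞^max(P,Q)` equals the supremum over nonempty subsets `A` of
`|log P(A) − log Q(A)|`, where `P(A) = ∑_{x ∈ A} P x`. -/
theorem stmt5 {α : Type*} [Fintype α] [Nonempty α] (P Q : α → ℝ)
    (hP : ∀ x, 0 < P x) (hQ : ∀ x, 0 < Q x)
    (hPsum : ∑ x, P x = 1) (hQsum : ∑ x, Q x = 1) :
    max (Dinf P Q) (Dinf Q P) =
      ⨆ A : {A : Finset α // A.Nonempty},
        |Real.log (∑ x ∈ A.1, P x) - Real.log (∑ x ∈ A.1, Q x)| := by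
  classical
  haveI : Nonempty {A : Finset α // A.Nonempty} :=
    ⟨⟨{Classical.arbitrary α}, Finset.singleton_nonempty _⟩⟩
  have bound : ∀ A : {A : Finset α // A.Nonempty},
      |Real.log (∑ x ∈ A.1, P x) - Real.log (∑ x ∈ A.1, Q x)| ≤ max (Dinf P Q) (Dinf Q P) := by
    rintro ⟨A, hA⟩
    rw [abs_sub_le_iff]
    exact ⟨le_max_of_le_left (dinf_side P Q hP hQ A hA),
      le_max_of_le_right (dinf_side Q P hQ hP A hA)⟩
  have hbdd : BddAbove (Set.range fun A : {A : Finset α // A.Nonempty} =>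
      |Real.log (∑ x ∈ A.1, P x) - Real.log (∑ x ∈ A.1, Q x)|) := by
    refine ⟨max (Dinf P Q) (Dinf Q P), ?_⟩
    rintro _ ⟨A, rfl⟩
    exact bound A
  apply le_antisymm
  · rw [max_le_iff]
    constructor
    · obtain ⟨x1, -, hx1⟩ := Finset.exists_mem_eq_sup' Finset.univ_nonempty
        (fun x => P x / Q x)
      have key : Dinf P Q = Real.log (∑ x ∈ ({x1} : Finset α), P x)
          - Real.log (∑ x ∈ ({x1} : Finset α), Q x) := by
        simp only [Finset.sum_singleton, Dinf, hx1]
        rw [Real.log_div (ne_of_gt (hP x1)) (ne_of_gt (hQ x1))]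
      calc Dinf P Q ≤ |Real.log (∑ x ∈ ({x1} : Finset α), P x)
            - Real.log (∑ x ∈ ({x1} : Finset α), Q x)| := key ▸ le_abs_self _
        _ ≤ _ := le_ciSup hbdd ⟨{x1}, Finset.singleton_nonempty x1⟩
    · obtain ⟨x2, -, hx2⟩ := Finset.exists_mem_eq_sup' Finset.univ_nonempty
        (fun x => Q x / P x)
      have key : Dinf Q P = Real.log (∑ x ∈ ({x2} : Finset α), Q x)
          - Real.log (∑ x ∈ ({x2} : Finset α), P x) := by
        simp only [Finset.sum_singleton, Dinf, hx2]
        rw [Real.log_div (ne_of_gt (hQ x2)) (ne_of_gt (hP x2))]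
      calc Dinf Q P ≤ |Real.log (∑ x ∈ ({x2} : Finset α), Q x)
            - Real.log (∑ x ∈ ({x2} : Finset α), P x)| := key ▸ le_abs_self _
        _ = |Real.log (∑ x ∈ ({x2} : Finset α), P x)
            - Real.log (∑ x ∈ ({x2} : Finset α), Q x)| := abs_sub_comm _ _
        _ ≤ _ := le_ciSup hbdd ⟨{x2}, Finset.singleton_nonempty x2⟩
  · exact ciSup_le bound
end

section
/- For all x ≥ 0 and 1 ≤ s ≤ 2, (1+x)^s ≤ 1 + s·x + x^s. -/
lemma aux8 (t s : ℝ) (ht : 0 ≤ t) (hs1 : 1 ≤ s) (hs2 : s ≤ 2) :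
    t ^ s ≤ (2 - s) * t + (s - 1) * t ^ 2 := by
  rcases ht.eq_or_lt with h | h
  · rw [← h, Real.zero_rpow (by linarith)]; nlinarith
  · have hg := Real.geom_mean_le_arith_mean2_weighted (w₁ := 2 - s) (w₂ := s - 1)
      (p₁ := t) (p₂ := t ^ 2) (by linarith) (by linarith) ht (by positivity) (by ring)
    calc t ^ s = t ^ (2 - s) * (t ^ 2) ^ (s - 1) := by
          rw [← Real.rpow_natCast t 2, ← Real.rpow_mul ht, ← Real.rpow_add h]
          norm_num; ring_nf
      _ ≤ (2 - s) * t + (s - 1) * t ^ 2 := hg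

/-- for `x ≥ 0` and `1 ≤ s ≤ 2`, `(1+x)^s ≤ 1 + s·x + x^s`. -/
theorem stmt8 (x s : ℝ) (hx : 0 ≤ x) (hs1 : 1 ≤ s) (hs2 : s ≤ 2) :
    (1 + x) ^ s ≤ 1 + s * x + x ^ s := by
  rcases le_or_gt x 1 with h | h
  · rcases hx.eq_or_lt with h0 | h0
    · rw [← h0]; simp [Real.zero_rpow (by linarith : s ≠ 0)]
    · have A := aux8 (1 + x) s (by linarith) hs1 hs2
      have B : x ^ (2:ℝ) ≤ x ^ s := Real.rpow_le_rpow_of_exponent_ge h0 h hs2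
      rw [Real.rpow_two] at B
      nlinarith [Real.rpow_nonneg hx s]
  · have hx0 : 0 < x := by linarith
    have hy : (0:ℝ) ≤ 1 + 1 / x := by positivity
    have A := aux8 (1 + 1 / x) s hy hs1 hs2
    have key : (1 + x) ^ s = x ^ s * (1 + 1 / x) ^ s := by
      rw [← Real.mul_rpow hx0.le hy]
      congr 1
      field_simp
      ring
    have e1 : x ^ s / x = x ^ (s - 1) := by
      rw [Real.rpow_sub hx0, Real.rpow_one]
    have e2 : x ^ s / x ^ 2 = x ^ (s - 2) := by
      rw [← Real.rpow_natCast x 2, ← Real.rpow_sub hx0]; norm_num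
    have b1 : x ^ (s - 1) ≤ x := by
      nth_rewrite 2 [← Real.rpow_one x]
      exact Real.rpow_le_rpow_of_exponent_le h.le (by linarith)
    have b2 : x ^ (s - 2) ≤ 1 := Real.rpow_le_one_of_one_le_of_nonpos h.le (by linarith)
    have hxs : 0 ≤ x ^ s := Real.rpow_nonneg hx0.le s
    have expand : x ^ s * ((2 - s) * (1 + 1/x) + (s - 1) * (1 + 1/x) ^ 2)
        = x ^ s + s * (x ^ s / x) + (s - 1) * (x ^ s / x ^ 2) := by
      field_simp
      ring
    calc (1 + x) ^ s = x ^ s * (1 + 1 / x) ^ s := key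
      _ ≤ x ^ s * ((2 - s) * (1 + 1/x) + (s - 1) * (1 + 1/x) ^ 2) :=
          mul_le_mul_of_nonneg_left A hxs
      _ = x ^ s + s * x ^ (s - 1) + (s - 1) * x ^ (s - 2) := by rw [expand, e1, e2]
      _ ≤ 1 + s * x + x ^ s := by nlinarith
end

section
/- For all 0 ≤ x ≤ 1 and s ≥ 2, (1+x)^s ≤ 1 + s(2^{s-1} − 1)x + x^s. -/
open Real Set

/-- The function `t ↦ (1+t)^p - t^p` is monotone on `[0,∞)` for `p ≥ 1`. -/
lemma stmt9_aux (p : ℝ) (hp : 1 ≤ p) :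
    MonotoneOn (fun t : ℝ => (1 + t) ^ p - t ^ p) (Icc (0:ℝ) 1) := by
  have hp0 : 0 < p := lt_of_lt_of_le one_pos hp
  have hcont : ContinuousOn (fun t : ℝ => (1 + t) ^ p - t ^ p) (Icc (0:ℝ) 1) := by
    apply ContinuousOn.sub
    · exact ((continuous_const.add continuous_id).continuousOn).rpow_const
        (fun t _ => Or.inr hp0.le)
    · exact continuousOn_id.rpow_const (fun t _ => Or.inr hp0.le)
  have hderiv : ∀ t ∈ Ioo (0:ℝ) 1,
      HasDerivAt (fun t : ℝ => (1 + t) ^ p - t ^ p)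
        (p * (1 + t) ^ (p - 1) - p * t ^ (p - 1)) t := by
    intro t ht
    have h1 : HasDerivAt (fun t : ℝ => (1 + t) ^ p) (p * (1 + t) ^ (p - 1)) t := by
      have := (Real.hasDerivAt_rpow_const (x := 1 + t) (p := p)
        (Or.inl (by nlinarith [ht.1]))).comp t
        ((hasDerivAt_id t).const_add 1)
      simpa [Function.comp_def] using this
    have h2 : HasDerivAt (fun t : ℝ => t ^ p) (p * t ^ (p - 1)) t :=
      Real.hasDerivAt_rpow_const (Or.inl (ne_of_gt ht.1))
    exact h1.sub h2
  apply monotoneOn_of_deriv_nonneg (convex_Icc 0 1) hcont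
  · intro t ht
    rw [interior_Icc] at ht
    exact (hderiv t ht).differentiableAt.differentiableWithinAt
  · intro t ht
    rw [interior_Icc] at ht
    rw [(hderiv t ht).deriv]
    have : t ^ (p - 1) ≤ (1 + t) ^ (p - 1) :=
      Real.rpow_le_rpow ht.1.le (by linarith [ht.1]) (by linarith)
    nlinarith

/-- for `0 ≤ x ≤ 1` and `s ≥ 2`, `(1+x)^s ≤ 1 + s(2^{s-1} − 1)x + x^s`. -/
theorem stmt9 (x s : ℝ) (hx0 : 0 ≤ x) (hx1 : x ≤ 1) (hs : 2 ≤ s) :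
    (1 + x) ^ s ≤ 1 + s * ((2 : ℝ) ^ (s - 1) - 1) * x + x ^ s := by
  have hs0 : 0 < s := by linarith
  set F : ℝ → ℝ := fun t => 1 + s * ((2:ℝ) ^ (s - 1) - 1) * t + t ^ s - (1 + t) ^ s with hF
  have hcont : ContinuousOn F (Icc (0:ℝ) 1) := by
    apply ContinuousOn.sub
    · apply ContinuousOn.add
      · exact (continuous_const.add (continuous_const.mul continuous_id)).continuousOn
      · exact continuousOn_id.rpow_const (fun t _ => Or.inr hs0.le)
    · exact ((continuous_const.add continuous_id).continuousOn).rpow_const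
        (fun t _ => Or.inr hs0.le)
  have hderiv : ∀ t ∈ Ioo (0:ℝ) 1,
      HasDerivAt F (s * ((2:ℝ) ^ (s - 1) - 1) + s * t ^ (s - 1) - s * (1 + t) ^ (s - 1)) t := by
    intro t ht
    have h1 : HasDerivAt (fun t : ℝ => (1 + t) ^ s) (s * (1 + t) ^ (s - 1)) t := by
      have := (Real.hasDerivAt_rpow_const (x := 1 + t) (p := s)
        (Or.inl (by nlinarith [ht.1]))).comp t
        ((hasDerivAt_id t).const_add 1)
      simpa [Function.comp_def] using this
    have h2 : HasDerivAt (fun t : ℝ => t ^ s) (s * t ^ (s - 1)) t :=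
      Real.hasDerivAt_rpow_const (Or.inl (ne_of_gt ht.1))
    have h3 : HasDerivAt (fun t : ℝ => 1 + s * ((2:ℝ) ^ (s - 1) - 1) * t)
        (s * ((2:ℝ) ^ (s - 1) - 1)) t := by
      simpa using ((hasDerivAt_id t).const_mul (s * ((2:ℝ) ^ (s - 1) - 1))).const_add 1
    exact (h3.add h2).sub h1
  have hmono : MonotoneOn F (Icc (0:ℝ) 1) := by
    apply monotoneOn_of_deriv_nonneg (convex_Icc 0 1) hcont
    · intro t ht
      rw [interior_Icc] at ht
      exact (hderiv t ht).differentiableAt.differentiableWithinAt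
    · intro t ht
      rw [interior_Icc] at ht
      rw [(hderiv t ht).deriv]
      have key := stmt9_aux (s - 1) (by linarith)
        (mem_Icc.mpr ⟨ht.1.le, ht.2.le⟩) (mem_Icc.mpr ⟨zero_le_one, le_refl 1⟩) ht.2.le
      simp only at key
      norm_num at key
      nlinarith
  have hF0 : F 0 = 0 := by
    simp [hF, Real.zero_rpow (ne_of_gt hs0), Real.one_rpow]
  have := hmono (mem_Icc.mpr ⟨le_refl 0, zero_le_one⟩) (mem_Icc.mpr ⟨hx0, hx1⟩) hx0
  rw [hF0] at this
  simp only [hF] at this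
  linarith
end

section
/- Let P be a probability mass function with full support on a finite set X. For any a > 0 and any real b, the supremum over all probability mass functions P̃ on X of a·H(P̃) + b·Σ_x P̃(x) log P(x) equals (a − b)·H_{b/a}(P), where H_γ denotes the Rényi entropy of order γ and H is the Shannon entropy. -/
open Finset Real

/-- Rényi entropy of order `γ` (Shannon entropy at `γ = 1`, by continuity). -/
noncomputable def renyiH {α : Type*} [Fintype α] (P : α → ℝ) (γ : ℝ) : ℝ :=
  if γ = 1 then -∑ x, P x * Real.log (P x)
  else (1 / (1 - γ)) * Real.log (∑ x, P x ^ γ)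

/-- Shannon entropy. -/
noncomputable def shannonH {α : Type*} [Fintype α] (P : α → ℝ) : ℝ :=
  -∑ x, P x * Real.log (P x)

/-- for a full-support pmf `P`, `a > 0` and `b ∈ ℝ`, the supremum over
pmfs `P̃` of `a·H(P̃) + b·∑ P̃(x) log P(x)` equals `(a − b)·H_{b/a}(P)`. -/
theorem stmt12 {α : Type*} [Fintype α] [Nonempty α] (P : α → ℝ)
    (hP : ∀ x, 0 < P x) (hPsum : ∑ x, P x = 1) (a b : ℝ) (ha : 0 < a) :
    sSup {y : ℝ | ∃ Pt : α → ℝ, (∀ x, 0 ≤ Pt x) ∧ (∑ x, Pt x = 1) ∧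
        y = a * shannonH Pt + b * ∑ x, Pt x * Real.log (P x)} =
      (a - b) * renyiH P (b / a) := by
  set γ := b / a with hγ
  have hb : b = a * γ := by rw [hγ, mul_div_assoc', eq_div_iff ha.ne', mul_comm]
  set S : ℝ := ∑ x, P x ^ γ with hSdef
  have hQpos : ∀ x : α, 0 < P x ^ γ := fun x => Real.rpow_pos_of_pos (hP x) γ
  have hS : 0 < S := Finset.sum_pos (fun x _ => hQpos x) Finset.univ_nonempty
  have key : IsGreatest {y : ℝ | ∃ Pt : α → ℝ, (∀ x, 0 ≤ Pt x) ∧ (∑ x, Pt x = 1) ∧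
      y = a * shannonH Pt + b * ∑ x, Pt x * Real.log (P x)} (a * Real.log S) := by
    constructor
    · refine ⟨fun x => P x ^ γ / S, fun x => (div_pos (hQpos x) hS).le, ?_, ?_⟩
      · rw [← Finset.sum_div, ← hSdef, div_self hS.ne']
      · unfold shannonH
        have hlog : ∀ x : α, Real.log (P x ^ γ / S) = γ * Real.log (P x) - Real.log S :=
          fun x => by rw [Real.log_div (hQpos x).ne' hS.ne', Real.log_rpow (hP x)]
        have hsum1 : ∑ x, P x ^ γ / S = 1 := by
          rw [← Finset.sum_div, ← hSdef, div_self hS.ne']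
        simp only [hlog, mul_sub]
        rw [Finset.sum_sub_distrib]
        rw [show ∀ f : α → ℝ, ∑ x, P x ^ γ / S * (γ * f x) = γ * ∑ x, P x ^ γ / S * f x from
          fun f => by rw [Finset.mul_sum]; congr 1; ext x; ring]
        rw [show ∑ x, P x ^ γ / S * Real.log S = Real.log S from by
          rw [← Finset.sum_mul, hsum1, one_mul]]
        rw [hb]; ring
    · rintro y ⟨Pt, hPt0, hPt1, rfl⟩
      have perterm : ∀ x : α,
          Pt x * Real.log (P x ^ γ) - Pt x * Real.log (Pt x) - Pt x * Real.log S
            ≤ P x ^ γ / S - Pt x := by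
        intro x
        rcases (hPt0 x).eq_or_lt with h | h
        · rw [← h]; simp; exact (div_pos (hQpos x) hS).le
        · have ht : (0:ℝ) < P x ^ γ / (S * Pt x) := div_pos (hQpos x) (mul_pos hS h)
          have h1 := Real.log_le_sub_one_of_pos ht
          rw [Real.log_div (hQpos x).ne' (mul_pos hS h).ne', Real.log_mul hS.ne' h.ne'] at h1
          have h2 : Pt x * (P x ^ γ / (S * Pt x)) = P x ^ γ / S := by
            field_simp
          nlinarith [mul_le_mul_of_nonneg_left h1 (hPt0 x)]
      have main : ∑ x, (Pt x * Real.log (P x ^ γ) - Pt x * Real.log (Pt x)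
          - Pt x * Real.log S) ≤ 0 := by
        calc ∑ x, (Pt x * Real.log (P x ^ γ) - Pt x * Real.log (Pt x) - Pt x * Real.log S)
            ≤ ∑ x, (P x ^ γ / S - Pt x) := Finset.sum_le_sum (fun x _ => perterm x)
          _ = 0 := by
              rw [Finset.sum_sub_distrib, ← Finset.sum_div, ← hSdef, div_self hS.ne', hPt1,
                sub_self]
      have e : ∀ x : α, Pt x * Real.log (P x ^ γ) = γ * (Pt x * Real.log (P x)) :=
        fun x => by rw [Real.log_rpow (hP x)]; ring
      simp only [e] at main
      rw [Finset.sum_sub_distrib, Finset.sum_sub_distrib, ← Finset.mul_sum,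
        ← Finset.sum_mul, hPt1, one_mul] at main
      unfold shannonH
      rw [hb]
      nlinarith [main, ha]
  rw [key.csSup_eq]
  unfold renyiH
  rw [← hSdef]
  by_cases h1 : γ = 1
  · have hba : b = a := by rw [hb, h1, mul_one]
    have hS1 : S = 1 := by
      rw [hSdef, h1]
      simp only [Real.rpow_one]
      exact hPsum
    rw [if_pos h1, hS1, Real.log_one, hba]
    ring
  · rw [if_neg h1]
    have h2 : 1 - γ ≠ 0 := sub_ne_zero.mpr (Ne.symm h1)
    have hab : a ≠ b := fun h => h1 (by rw [hγ, ← h, div_self ha.ne'])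
    have h3 : (a - b) * (1 / (1 - γ)) = a := by
      rw [hγ]
      have hab' : a - b ≠ 0 := sub_ne_zero.mpr hab
      field_simp
    rw [← mul_assoc, h3]
end

section
/- Let P be a probability mass function with full support on a finite set X. For any a < 0 and any real b, the infimum over all probability mass functions P̃ on X of a·H(P̃) + b·Σ_x P̃(x) log P(x) equals (a − b)·H_{b/a}(P). -/
open Finset Real

/-- Gibbs' inequality. -/
lemma gibbs_aux {α : Type*} [Fintype α] (Q Pt : α → ℝ) (hQ : ∀ x, 0 < Q x)
    (hQs : ∑ x, Q x = 1) (hPt : ∀ x, 0 ≤ Pt x) (hPts : ∑ x, Pt x = 1) :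
    ∑ x, Pt x * Real.log (Q x) ≤ ∑ x, Pt x * Real.log (Pt x) := by
  have key : ∑ x, (Pt x * Real.log (Q x) - Pt x * Real.log (Pt x)) ≤
      ∑ x, (Q x - Pt x) := by
    apply Finset.sum_le_sum
    intro x _
    rcases eq_or_lt_of_le (hPt x) with h0 | h0
    · simp [← h0]
      exact (hQ x).le
    · have hlog := Real.log_le_sub_one_of_pos (div_pos (hQ x) h0)
      rw [Real.log_div (ne_of_gt (hQ x)) (ne_of_gt h0)] at hlog
      have h2 := mul_le_mul_of_nonneg_left hlog h0.le
      have h3 : Pt x * (Q x / Pt x - 1) = Q x - Pt x := by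
        field_simp
      rw [h3] at h2
      nlinarith [h2]
  rw [Finset.sum_sub_distrib, Finset.sum_sub_distrib, hQs, hPts] at key
  linarith

/-- for a full-support pmf `P`, `a < 0` and `b ∈ ℝ`, the infimum over
pmfs `P̃` of `a·H(P̃) + b·∑ P̃(x) log P(x)` equals `(a − b)·H_{b/a}(P)`. -/
theorem stmt13 {α : Type*} [Fintype α] [Nonempty α] (P : α → ℝ)
    (hP : ∀ x, 0 < P x) (hPsum : ∑ x, P x = 1) (a b : ℝ) (ha : a < 0) :
    sInf {y : ℝ | ∃ Pt : α → ℝ, (∀ x, 0 ≤ Pt x) ∧ (∑ x, Pt x = 1) ∧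
        y = a * shannonH Pt + b * ∑ x, Pt x * Real.log (P x)} =
      (a - b) * renyiH P (b / a) := by
  have ha' : a ≠ 0 := ne_of_lt ha
  set γ := b / a with hγ
  have hab : a * γ = b := by rw [hγ]; field_simp
  set Z := ∑ x, P x ^ γ with hZdef
  have hZpos : 0 < Z := by
    apply Finset.sum_pos
    · intro x _; exact Real.rpow_pos_of_pos (hP x) γ
    · exact Finset.univ_nonempty
  -- RHS equals a * log Z
  have hRHS : (a - b) * renyiH P γ = a * Real.log Z := by
    by_cases h1 : γ = 1
    · have hb : b = a := by
        rw [hγ] at h1; field_simp at h1; linarith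
      have hZ1 : Z = 1 := by
        rw [hZdef, h1]
        simpa using hPsum
      rw [hZ1, Real.log_one, hb]
      ring
    · rw [renyiH, if_neg h1]
      have h1γ : 1 - γ ≠ 0 := sub_ne_zero.mpr (Ne.symm h1)
      have hne : a - b ≠ 0 := by
        intro h
        apply h1
        rw [hγ]
        field_simp
        linarith
      have : (a - b) * (1 / (1 - γ)) = a := by
        rw [hγ]
        field_simp
      rw [← hZdef, ← mul_assoc, this]
  -- the minimizer
  set Q : α → ℝ := fun x => P x ^ γ / Z with hQdef
  have hQpos : ∀ x, 0 < Q x := fun x => div_pos (Real.rpow_pos_of_pos (hP x) γ) hZpos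
  have hQsum : ∑ x, Q x = 1 := by
    rw [hQdef, ← Finset.sum_div, ← hZdef, div_self (ne_of_gt hZpos)]
  have hlogQ : ∀ x, Real.log (Q x) = γ * Real.log (P x) - Real.log Z := by
    intro x
    rw [hQdef]
    rw [Real.log_div (ne_of_gt (Real.rpow_pos_of_pos (hP x) γ)) (ne_of_gt hZpos),
      Real.log_rpow (hP x)]
  -- value at the minimizer
  have hQval : a * shannonH Q + b * ∑ x, Q x * Real.log (P x) = a * Real.log Z := by
    have hs : ∑ x, Q x * Real.log (Q x) =
        γ * (∑ x, Q x * Real.log (P x)) - Real.log Z := by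
      have h1 : ∀ x ∈ Finset.univ, Q x * Real.log (Q x) =
          γ * (Q x * Real.log (P x)) - Real.log Z * Q x := by
        intro x _; rw [hlogQ x]; ring
      rw [Finset.sum_congr rfl h1, Finset.sum_sub_distrib, ← Finset.mul_sum,
        ← Finset.mul_sum, hQsum, mul_one]
    rw [shannonH, hs, ← hab]
    ring
  set S : Set ℝ := {y : ℝ | ∃ Pt : α → ℝ, (∀ x, 0 ≤ Pt x) ∧ (∑ x, Pt x = 1) ∧
      y = a * shannonH Pt + b * ∑ x, Pt x * Real.log (P x)} with hSdef
  have hmem : a * Real.log Z ∈ S := ⟨Q, fun x => (hQpos x).le, hQsum, hQval.symm⟩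
  have hlb : ∀ y ∈ S, a * Real.log Z ≤ y := by
    rintro y ⟨Pt, hPt, hPts, rfl⟩
    have hPtlogQ : ∑ x, Pt x * Real.log (Q x) =
        γ * (∑ x, Pt x * Real.log (P x)) - Real.log Z := by
      have h1 : ∀ x ∈ Finset.univ, Pt x * Real.log (Q x) =
          γ * (Pt x * Real.log (P x)) - Real.log Z * Pt x := by
        intro x _; rw [hlogQ x]; ring
      rw [Finset.sum_congr rfl h1, Finset.sum_sub_distrib, ← Finset.mul_sum,
        ← Finset.mul_sum, hPts, mul_one]
    have hg := gibbs_aux Q Pt hQpos hQsum hPt hPts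
    rw [hPtlogQ] at hg
    have hmul := mul_le_mul_of_nonneg_left hg (neg_nonneg.mpr ha.le)
    have hmul2 : -b * (∑ x, Pt x * Real.log (P x)) + a * Real.log Z ≤
        -a * ∑ x, Pt x * Real.log (Pt x) := by
      rw [← hab]
      linear_combination hmul
    rw [shannonH]
    linarith [hmul2]
  rw [hRHS]
  exact le_antisymm (csInf_le ⟨a * Real.log Z, hlb⟩ hmem) (le_csInf ⟨_, hmem⟩ hlb)
end

section
/- For a probability mass function P with full support on a finite set X and jump level ω with 0 ≤ ω < H_∞(P), the optimization min over probability mass functions P̃ with D(P̃‖P) ≤ ω of −Σ_x P̃(x) log P(x) equals max over t ∈ (0,∞) of { H_{1+t}(P) − ω/t }, where H_∞(P) := −log max_x P(x). -/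
open Finset Real

lemma gibbs' {α : Type*} [Fintype α] (f q : α → ℝ) (hf : ∀ x, 0 ≤ f x)
    (hfs : ∑ x, f x = 1) (hq : ∀ x, 0 < q x) (hqs : ∑ x, q x = 1) :
    0 ≤ ∑ x, f x * Real.log (f x / q x) := by
  have key : ∀ x, f x * Real.log (q x / f x) ≤ q x - f x := by
    intro x
    rcases eq_or_lt_of_le (hf x) with h | h
    · simp [← h, (hq x).le]
    · have hpos : 0 < q x / f x := div_pos (hq x) h
      calc f x * Real.log (q x / f x) ≤ f x * (q x / f x - 1) :=
            mul_le_mul_of_nonneg_left (Real.log_le_sub_one_of_pos hpos) (hf x)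
        _ = q x - f x := by field_simp
  have hsum : ∑ x, f x * Real.log (q x / f x) ≤ 0 := by
    calc ∑ x, f x * Real.log (q x / f x) ≤ ∑ x, (q x - f x) :=
          Finset.sum_le_sum (fun x _ => key x)
      _ = 0 := by rw [Finset.sum_sub_distrib, hfs, hqs]; ring
  have heq : ∀ x, f x * Real.log (f x / q x) = -(f x * Real.log (q x / f x)) := by
    intro x
    rcases eq_or_lt_of_le (hf x) with h | h
    · simp [← h]
    · rw [Real.log_div (ne_of_gt h) (ne_of_gt (hq x)),
        Real.log_div (ne_of_gt (hq x)) (ne_of_gt h)]; ring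
  rw [Finset.sum_congr rfl (fun x _ => heq x)]
  simpa using hsum

lemma wd' {α : Type*} [Fintype α] [Nonempty α] (P f : α → ℝ) (hP : ∀ x, 0 < P x)
    (hf : ∀ x, 0 ≤ f x) (hfs : ∑ x, f x = 1) (ω t : ℝ)
    (hD : ∑ x, f x * Real.log (f x / P x) ≤ ω) (ht : 0 < t) :
    (-1 / t) * Real.log (∑ x, P x ^ (1 + t)) - ω / t ≤ -∑ x, f x * Real.log (P x) := by
  set Z := ∑ x, P x ^ (1 + t) with hZdef
  have hZpos : 0 < Z :=
    Finset.sum_pos (fun x _ => Real.rpow_pos_of_pos (hP x) _) Finset.univ_nonempty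
  set q : α → ℝ := fun x => P x ^ (1 + t) / Z with hqdef
  have hq : ∀ x, 0 < q x := fun x => div_pos (Real.rpow_pos_of_pos (hP x) _) hZpos
  have hqs : ∑ x, q x = 1 := by
    simp only [hqdef, ← Finset.sum_div]; exact div_self hZpos.ne'
  have h0 := gibbs' f q hf hfs hq hqs
  have hexp : ∀ x, f x * Real.log (f x / q x) =
      f x * Real.log (f x / P x) - t * (f x * Real.log (P x)) + f x * Real.log Z := by
    intro x
    rcases eq_or_lt_of_le (hf x) with h | h
    · simp [← h]
    · have hlq : Real.log (q x) = (1 + t) * Real.log (P x) - Real.log Z := by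
        rw [hqdef]
        rw [Real.log_div (ne_of_gt (Real.rpow_pos_of_pos (hP x) _)) hZpos.ne',
          Real.log_rpow (hP x)]
      rw [Real.log_div h.ne' (hq x).ne', Real.log_div h.ne' (hP x).ne', hlq]; ring
  have hsplit : ∑ x, f x * Real.log (f x / q x) =
      (∑ x, f x * Real.log (f x / P x)) - t * (∑ x, f x * Real.log (P x)) + Real.log Z := by
    rw [Finset.sum_congr rfl (fun x _ => hexp x), Finset.sum_add_distrib,
      Finset.sum_sub_distrib, ← Finset.mul_sum, ← Finset.sum_mul, hfs, one_mul]
  have h2 : -Real.log Z - ω ≤ t * (-∑ x, f x * Real.log (P x)) := by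
    rw [hsplit] at h0; linarith
  calc (-1 / t) * Real.log Z - ω / t = (-Real.log Z - ω) / t := by ring
    _ ≤ -∑ x, f x * Real.log (P x) := by
        rw [div_le_iff₀ ht]; linarith

/-- for a full-support pmf `P` and `0 ≤ ω < H_∞(P) = −log max_x P(x)`,
`min { −∑ P̃(x) log P(x) : D(P̃‖P) ≤ ω } = sup_{t > 0} { H_{1+t}(P) − ω/t }`,
where `H_{1+t}(P) = (−1/t) log ∑ P(x)^{1+t}`. -/
theorem stmt17 {α : Type*} [Fintype α] [Nonempty α] (P : α → ℝ)
    (hP : ∀ x, 0 < P x) (hPsum : ∑ x, P x = 1)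
    (ω : ℝ) (hω0 : 0 ≤ ω)
    (hω : ω < -Real.log (Finset.univ.sup' Finset.univ_nonempty P)) :
    sInf {y : ℝ | ∃ Pt : α → ℝ, (∀ x, 0 ≤ Pt x) ∧ (∑ x, Pt x = 1) ∧
        (∑ x, Pt x * Real.log (Pt x / P x)) ≤ ω ∧
        y = -∑ x, Pt x * Real.log (P x)} =
      sSup {y : ℝ | ∃ t : ℝ, 0 < t ∧
        y = (-1 / t) * Real.log (∑ x, P x ^ (1 + t)) - ω / t} := by
  set L := {y : ℝ | ∃ Pt : α → ℝ, (∀ x, 0 ≤ Pt x) ∧ (∑ x, Pt x = 1) ∧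
      (∑ x, Pt x * Real.log (Pt x / P x)) ≤ ω ∧
      y = -∑ x, Pt x * Real.log (P x)} with hLdef
  set R := {y : ℝ | ∃ t : ℝ, 0 < t ∧
      y = (-1 / t) * Real.log (∑ x, P x ^ (1 + t)) - ω / t} with hRdef
  -- the exponential form of the partition function
  set Z : ℝ → ℝ := fun t => ∑ x, Real.exp ((1 + t) * Real.log (P x)) with hZdef
  have hZr : ∀ t : ℝ, (∑ x, P x ^ (1 + t)) = Z t := by
    intro t
    exact Finset.sum_congr rfl fun x _ => by
      rw [Real.rpow_def_of_pos (hP x), mul_comm]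
  have hZpos : ∀ t, 0 < Z t :=
    fun t => Finset.sum_pos (fun x _ => Real.exp_pos _) Finset.univ_nonempty
  have hZ0 : Z 0 = 1 := by
    rw [hZdef]
    simp only [add_zero, one_mul]
    rw [Finset.sum_congr rfl fun x _ => Real.exp_log (hP x)]
    exact hPsum
  -- the tilted family
  set Q : ℝ → α → ℝ := fun t x => Real.exp ((1 + t) * Real.log (P x)) / Z t with hQdef
  have hQpos : ∀ t x, 0 < Q t x := fun t x => div_pos (Real.exp_pos _) (hZpos t)
  have hQsum : ∀ t, ∑ x, Q t x = 1 := by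
    intro t; rw [hQdef]; simp only [← Finset.sum_div]; exact div_self (hZpos t).ne'
  set g : ℝ → ℝ := fun t => ∑ x, Q t x * Real.log (Q t x / P x) with hgdef
  have hgnn : ∀ t, 0 ≤ g t := fun t => gibbs' (Q t) P (fun x => (hQpos t x).le) (hQsum t) hP hPsum
  have hg0 : g 0 = 0 := by
    rw [hgdef]
    simp only
    rw [Finset.sum_congr rfl (fun x _ => ?_), Finset.sum_const_zero]
    have : Q 0 x = P x := by
      rw [hQdef]; simp only [add_zero, one_mul, hZ0, Real.exp_log (hP x), div_one]
    rw [this, div_self (hP x).ne', Real.log_one, mul_zero]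
  -- identity  g t = t * ∑ Q log P - log Z t
  have hgid : ∀ t, g t = t * (∑ x, Q t x * Real.log (P x)) - Real.log (Z t) := by
    intro t
    have hterm : ∀ x, Q t x * Real.log (Q t x / P x) =
        t * (Q t x * Real.log (P x)) - Q t x * Real.log (Z t) := by
      intro x
      have hlq : Real.log (Q t x) = (1 + t) * Real.log (P x) - Real.log (Z t) := by
        rw [hQdef]
        simp only
        rw [Real.log_div (Real.exp_pos _).ne' (hZpos t).ne', Real.log_exp]
      rw [Real.log_div (hQpos t x).ne' (hP x).ne', hlq]; ring
    rw [hgdef]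
    simp only
    rw [Finset.sum_congr rfl (fun x _ => hterm x), Finset.sum_sub_distrib,
      ← Finset.mul_sum, ← Finset.sum_mul, hQsum, one_mul]
  -- cross entropy of the tilted distribution
  have hC : ∀ t : ℝ, t ≠ 0 →
      -∑ x, Q t x * Real.log (P x) = (-1 / t) * Real.log (Z t) - g t / t := by
    intro t ht
    rw [hgid t]
    field_simp
    ring
  -- continuity of g
  have hZc : Continuous Z := by
    rw [hZdef]
    exact continuous_finset_sum _ fun x _ =>
      (Real.continuous_exp.comp ((continuous_const.add continuous_id).mul continuous_const))
  have hQc : ∀ x, Continuous fun t => Q t x := by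
    intro x
    rw [hQdef]
    exact (Real.continuous_exp.comp
      ((continuous_const.add continuous_id).mul continuous_const)).div hZc
      fun t => (hZpos t).ne'
  have hgc : Continuous g := by
    rw [hgdef]
    refine continuous_finset_sum _ fun x _ => (hQc x).mul ?_
    exact Continuous.log ((hQc x).div_const (P x))
      fun t => (div_pos (hQpos t x) (hP x)).ne'
  -- membership of the base point
  have hPmem : (-∑ x, P x * Real.log (P x)) ∈ L := by
    refine ⟨P, fun x => (hP x).le, hPsum, ?_, rfl⟩
    rw [Finset.sum_congr rfl (fun x _ => by
      rw [div_self (hP x).ne', Real.log_one, mul_zero]), Finset.sum_const_zero]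
    exact hω0
  -- memberships of the tilted points
  have hQmemL : ∀ t : ℝ, g t ≤ ω → (-∑ x, Q t x * Real.log (P x)) ∈ L :=
    fun t hgt => ⟨Q t, fun x => (hQpos t x).le, hQsum t, hgt, rfl⟩
  have hRmem : ∀ t : ℝ, 0 < t → ((-1 / t) * Real.log (Z t) - ω / t) ∈ R := by
    intro t ht
    exact ⟨t, ht, by rw [hZr]⟩
  have hRne : R.Nonempty := ⟨_, hRmem 1 one_pos⟩
  have hLne : L.Nonempty := ⟨_, hPmem⟩
  have hbddR : BddAbove R := by
    refine ⟨-∑ x, P x * Real.log (P x), fun z hz => ?_⟩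
    obtain ⟨t, ht, rfl⟩ := hz
    refine wd' P P hP (fun x => (hP x).le) hPsum ω t ?_ ht
    rw [Finset.sum_congr rfl (fun x _ => by
      rw [div_self (hP x).ne', Real.log_one, mul_zero]), Finset.sum_const_zero]
    exact hω0
  have hbddL : BddBelow L := by
    refine ⟨(-1 / 1) * Real.log (∑ x, P x ^ (1 + (1:ℝ))) - ω / 1, fun y hy => ?_⟩
    obtain ⟨f, hf, hfs, hD, rfl⟩ := hy
    exact wd' P f hP hf hfs ω 1 hD one_pos
  refine le_antisymm ?_ ?_
  · -- sInf L ≤ sSup R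
    refine le_of_forall_pos_le_add fun ε hε => ?_
    rcases eq_or_lt_of_le hω0 with hω0' | hωpos
    · -- ω = 0 : use t → 0⁺ limit
      have hωz : ω = 0 := hω0'.symm
      -- derivative of log ∘ Z at 0
      have hZder : HasDerivAt Z (∑ x, P x * Real.log (P x)) 0 := by
        have h1 : ∀ x : α, HasDerivAt (fun t : ℝ => Real.exp ((1 + t) * Real.log (P x)))
            (P x * Real.log (P x)) 0 := by
          intro x
          have h2 : HasDerivAt (fun t : ℝ => (1 + t) * Real.log (P x)) (Real.log (P x)) 0 := by
            simpa using ((hasDerivAt_id (0:ℝ)).const_add 1).mul_const (Real.log (P x))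
          have h3 := h2.exp
          simpa [Real.exp_log (hP x)] using h3
        rw [hZdef]
        exact HasDerivAt.fun_sum fun x _ => h1 x
      have hlogder : HasDerivAt (fun t => Real.log (Z t))
          (∑ x, P x * Real.log (P x)) 0 := by
        have := hZder.log (by rw [hZ0]; norm_num)
        simpa [hZ0] using this
      have hslope := hasDerivAt_iff_tendsto_slope.mp hlogder
      have htend : Filter.Tendsto (fun t => (-1 / t) * Real.log (Z t))
          (nhdsWithin 0 (Set.Ioi 0)) (nhds (-∑ x, P x * Real.log (P x))) := by
        have h4 : Filter.Tendsto (fun t => -(slope (fun t => Real.log (Z t)) 0 t))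
            (nhdsWithin 0 (Set.Ioi 0)) (nhds (-∑ x, P x * Real.log (P x))) :=
          (hslope.mono_left (nhdsWithin_mono 0 fun x hx => ne_of_gt hx)).neg
        refine h4.congr fun t => ?_
        rw [slope_def_field]
        have : Real.log (Z 0) = 0 := by rw [hZ0, Real.log_one]
        rw [this]
        ring
      have hub : ∀ᶠ t in nhdsWithin 0 (Set.Ioi 0),
          (-1 / t) * Real.log (Z t) ≤ sSup R := by
        filter_upwards [self_mem_nhdsWithin] with t ht
        have := le_csSup hbddR (hRmem t ht)
        rw [hωz] at this
        simpa using this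
      have := le_of_tendsto htend hub
      calc sInf L ≤ -∑ x, P x * Real.log (P x) := csInf_le hbddL hPmem
        _ ≤ sSup R := this
        _ ≤ sSup R + ε := by linarith
    · -- ω > 0
      by_cases hex : ∃ t₁ : ℝ, 0 < t₁ ∧ ω ≤ g t₁
      · obtain ⟨t₁, ht₁, hgt₁⟩ := hex
        have hIcc : ω ∈ Set.Icc (g 0) (g t₁) := by rw [hg0]; exact ⟨hω0, hgt₁⟩
        obtain ⟨t₀, ht₀mem, hgt₀⟩ :=
          intermediate_value_Icc ht₁.le hgc.continuousOn hIcc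
        have ht₀pos : 0 < t₀ := by
          rcases eq_or_lt_of_le ht₀mem.1 with h | h
          · exfalso; rw [← h, hg0] at hgt₀; linarith
          · exact h
        have hyL : (-∑ x, Q t₀ x * Real.log (P x)) ∈ L := hQmemL t₀ (le_of_eq hgt₀)
        have hyR : (-∑ x, Q t₀ x * Real.log (P x)) ∈ R := by
          rw [hC t₀ ht₀pos.ne', hgt₀]
          exact hRmem t₀ ht₀pos
        calc sInf L ≤ -∑ x, Q t₀ x * Real.log (P x) := csInf_le hbddL hyL
          _ ≤ sSup R := le_csSup hbddR hyR
          _ ≤ sSup R + ε := by linarith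
      · push_neg at hex
        set t := ω / ε with htdef
        have ht : 0 < t := div_pos hωpos hε
        have hgt : g t < ω := hex t ht
        have hyL : (-∑ x, Q t x * Real.log (P x)) ∈ L := hQmemL t hgt.le
        have hkey : -∑ x, Q t x * Real.log (P x) ≤
            ((-1 / t) * Real.log (Z t) - ω / t) + ε := by
          rw [hC t ht.ne']
          have h5 : (ω - g t) / t ≤ ω / t := by
            gcongr
            linarith [hgnn t]
          have h6 : ω / t = ε := by
            rw [htdef]; field_simp
          have h7 := sub_div ω (g t) t
          linarith
        calc sInf L ≤ -∑ x, Q t x * Real.log (P x) := csInf_le hbddL hyL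
          _ ≤ ((-1 / t) * Real.log (Z t) - ω / t) + ε := hkey
          _ ≤ sSup R + ε := by
              have := le_csSup hbddR (hRmem t ht); linarith
  · -- sSup R ≤ sInf L
    refine le_csInf hLne fun y hy => ?_
    obtain ⟨f, hf, hfs, hD, rfl⟩ := hy
    exact csSup_le hRne fun z hz => by
      obtain ⟨t, ht, rfl⟩ := hz
      exact wd' P f hP hf hfs ω t hD ht
end
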